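/- If Γ is a k-regular, ω-clique regular graph on n vertices with m = nk/(ω(ω−1)) ω-cliques, then the characteristic polynomial of the ω-clique graph satisfies p(C_ω(Γ); λ) = (λ+ω)^{m−n} · p(Γ; λ + ω − k/(ω−1)). -/

import Mathlib

open SimpleGraph

/-- A graph is `ω`-clique regular if its edge set is nonempty and every edge lies in a
unique clique of order `ω`. -/
def IsCliqueRegular {V : Type*} (G : SimpleGraph V) (ω : ℕ) : Prop :=
  G.edgeSet.Nonempty ∧
    ∀ ⦃x y : V⦄, G.Adj x y → ∃! s : Finset V, G.IsNClique ω s ∧ x ∈ s ∧ y ∈ s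

/-- The `ω`-clique graph: vertices are the `ω`-cliques of `G`, two distinct cliques
adjacent iff they have nonempty intersection. -/
def cliqueGraph {V : Type*} [DecidableEq V] (G : SimpleGraph V) (ω : ℕ) :
    SimpleGraph {s : Finset V // G.IsNClique ω s} where
  Adj a b := a ≠ b ∧ (a.val ∩ b.val).Nonempty
  symm := ⟨fun a b h => ⟨h.1.symm, by rw [Finset.inter_comm]; exact h.2⟩⟩
  loopless := ⟨fun a h => h.1 rfl⟩

instance {V : Type*} [DecidableEq V] (G : SimpleGraph V) (ω : ℕ) :
    DecidableRel (cliqueGraph G ω).Adj :=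
  fun a b => inferInstanceAs (Decidable (a ≠ b ∧ (a.val ∩ b.val).Nonempty))

open Matrix Finset


lemma myEvalCharpoly {n : Type*} [Fintype n] [DecidableEq n] (M : Matrix n n ℝ) (x : ℝ) :
    (M.charpoly).eval x = (x • (1 : Matrix n n ℝ) - M).det := by
  rw [Matrix.charpoly, ← Polynomial.coe_evalRingHom, RingHom.map_det]
  congr 1
  ext i j
  by_cases h : i = j <;>
    simp [h, Matrix.charmatrix_apply, Matrix.one_apply, Matrix.diagonal_apply]

lemma myKey {α β : Type*} [Fintype α] [Fintype β] [DecidableEq α] [DecidableEq β]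
    (N : Matrix α β ℝ) (y : ℝ) (hy : y ≠ 0) :
    y ^ Fintype.card β * (y • (1 : Matrix α α ℝ) - N * Nᵀ).det =
      y ^ Fintype.card α * (y • (1 : Matrix β β ℝ) - Nᵀ * N).det := by
  have e1 : y • (1 : Matrix α α ℝ) - N * Nᵀ = y • (1 + ((-y⁻¹) • N) * Nᵀ) := by
    rw [smul_add, Matrix.smul_mul, smul_smul]
    rw [mul_neg, mul_inv_cancel₀ hy, neg_one_smul]
    exact sub_eq_add_neg _ _
  have e2 : y • (1 : Matrix β β ℝ) - Nᵀ * N = y • (1 + Nᵀ * ((-y⁻¹) • N)) := by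
    rw [smul_add, Matrix.mul_smul, smul_smul]
    rw [mul_neg, mul_inv_cancel₀ hy, neg_one_smul]
    exact sub_eq_add_neg _ _
  rw [e1, e2, Matrix.det_smul, Matrix.det_smul, Matrix.det_one_add_mul_comm]
  ring


section Comb

variable {V : Type*} [Fintype V] [DecidableEq V] (G : SimpleGraph V) [DecidableRel G.Adj]
  (ω : ℕ)

/-- the vertex-clique incidence matrix -/
noncomputable def cliqueInc : Matrix V {s : Finset V // G.IsNClique ω s} ℝ :=
  fun v s => if v ∈ s.val then 1 else 0

variable {G ω}

lemma pair_filter (hcr : IsCliqueRegular G ω) {u v : V} (h : G.Adj u v) :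
    ∃ a : {s : Finset V // G.IsNClique ω s},
      (univ.filter fun s : {s : Finset V // G.IsNClique ω s} =>
        u ∈ s.val ∧ v ∈ s.val) = {a} := by
  obtain ⟨t, ⟨ht, htu, htv⟩, huniq⟩ := hcr.2 h
  refine ⟨⟨t, ht⟩, ?_⟩
  ext s
  simp only [mem_filter, mem_univ, true_and, mem_singleton]
  constructor
  · rintro ⟨hu, hv⟩
    exact Subtype.ext (huniq s.val ⟨s.2, hu, hv⟩)
  · rintro rfl
    exact ⟨htu, htv⟩

lemma card_pair_filter (hcr : IsCliqueRegular G ω) {u v : V} (h : G.Adj u v) :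
    (univ.filter fun s : {s : Finset V // G.IsNClique ω s} =>
        u ∈ s.val ∧ v ∈ s.val).card = 1 := by
  obtain ⟨a, ha⟩ := pair_filter hcr h
  rw [ha, Finset.card_singleton]

lemma card_vertex_filter {k : ℕ} (hcr : IsCliqueRegular G ω)
    (hreg : G.IsRegularOfDegree k) (v : V) :
    (univ.filter fun s : {s : Finset V // G.IsNClique ω s} => v ∈ s.val).card * (ω - 1)
      = k := by
  classical
  have hk : (G.neighborFinset v).card = k := hreg v
  calc (univ.filter fun s : {s : Finset V // G.IsNClique ω s} => v ∈ s.val).card * (ω - 1)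
      = ∑ s ∈ (univ.filter fun s : {s : Finset V // G.IsNClique ω s} => v ∈ s.val),
          (ω - 1) := by rw [Finset.sum_const, smul_eq_mul, mul_comm]
    _ = ∑ s ∈ (univ.filter fun s : {s : Finset V // G.IsNClique ω s} => v ∈ s.val),
          ((G.neighborFinset v).filter (· ∈ s.val)).card := by
        refine Finset.sum_congr rfl fun s hs => ?_
        simp only [mem_filter, mem_univ, true_and] at hs
        have : (G.neighborFinset v).filter (· ∈ s.val) = s.val.erase v := by
          ext w
          simp only [mem_filter, mem_neighborFinset, mem_erase]
          constructor
          · rintro ⟨haw, hw⟩; exact ⟨(G.ne_of_adj haw).symm, hw⟩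
          · rintro ⟨hne, hw⟩; exact ⟨s.2.1 hs hw (Ne.symm hne), hw⟩
        rw [this, Finset.card_erase_of_mem hs, s.2.2]
    _ = ∑ s : {s : Finset V // G.IsNClique ω s},
          ∑ w ∈ G.neighborFinset v, if v ∈ s.val ∧ w ∈ s.val then 1 else 0 := by
        rw [Finset.sum_filter]
        refine Finset.sum_congr rfl fun s _ => ?_
        by_cases hv : v ∈ s.val
        · simp only [hv, if_true, true_and, Finset.card_filter]
        · simp [hv]
    _ = ∑ w ∈ G.neighborFinset v,
          ∑ s : {s : Finset V // G.IsNClique ω s},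
            if v ∈ s.val ∧ w ∈ s.val then 1 else 0 := Finset.sum_comm
    _ = ∑ w ∈ G.neighborFinset v, 1 := by
        refine Finset.sum_congr rfl fun w hw => ?_
        rw [mem_neighborFinset] at hw
        rw [← Finset.card_filter]
        exact card_pair_filter hcr hw
    _ = k := by rw [Finset.sum_const, smul_eq_mul, mul_one, hk]


end Comb

section Mat
set_option linter.unusedSectionVars false

variable {V : Type*} [Fintype V] [DecidableEq V] {G : SimpleGraph V} [DecidableRel G.Adj]
  {ω k : ℕ}

lemma inc_mul_transpose (hcr : IsCliqueRegular G ω) (hreg : G.IsRegularOfDegree k)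
    (hω2 : 2 ≤ ω) :
    cliqueInc G ω * (cliqueInc G ω)ᵀ
      = G.adjMatrix ℝ + ((k : ℝ) / ((ω : ℝ) - 1)) • 1 := by
  have hω1 : ((ω : ℝ) - 1) ≠ 0 := by
    have : (2 : ℝ) ≤ (ω : ℝ) := by exact_mod_cast hω2
    linarith
  ext u v
  rw [Matrix.mul_apply]
  have hsum : ∀ s : {s : Finset V // G.IsNClique ω s},
      cliqueInc G ω u s * (cliqueInc G ω)ᵀ s v
        = if u ∈ s.val ∧ v ∈ s.val then (1 : ℝ) else 0 := by
    intro s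
    simp only [cliqueInc, Matrix.transpose_apply]
    by_cases h1 : u ∈ s.val <;> by_cases h2 : v ∈ s.val <;> simp [h1, h2]
  simp only [hsum, Finset.sum_ite_eq, Finset.sum_boole]
  by_cases huv : u = v
  · subst huv
    simp only [and_self, Matrix.add_apply, adjMatrix_apply, Matrix.smul_apply,
      Matrix.one_apply_eq, G.irrefl, if_false, smul_eq_mul, mul_one, zero_add]
    have hcount := card_vertex_filter hcr hreg (ω := ω) u
    have : ((univ.filter fun s : {s : Finset V // G.IsNClique ω s} => u ∈ s.val).card : ℝ)
        * ((ω : ℝ) - 1) = k := by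
      have h1 : (1 : ℕ) ≤ ω := le_trans one_le_two hω2
      calc ((univ.filter fun s : {s : Finset V // G.IsNClique ω s} => u ∈ s.val).card : ℝ)
            * ((ω : ℝ) - 1)
          = (((univ.filter fun s : {s : Finset V // G.IsNClique ω s} => u ∈ s.val).card
              * (ω - 1) : ℕ) : ℝ) := by push_cast [Nat.cast_sub h1]; ring
        _ = k := by rw [hcount]
    field_simp at this ⊢
    linarith
  · simp only [Matrix.add_apply, adjMatrix_apply, Matrix.smul_apply,
      Matrix.one_apply_ne huv, smul_eq_mul, mul_zero, add_zero]
    by_cases hadj : G.Adj u v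
    · rw [card_pair_filter hcr hadj]
      simp [hadj]
    · have : (univ.filter fun s : {s : Finset V // G.IsNClique ω s} =>
          u ∈ s.val ∧ v ∈ s.val) = ∅ := by
        refine Finset.filter_false_of_mem fun s _ => ?_
        rintro ⟨hu, hv⟩
        exact hadj (s.2.1 hu hv huv)
      rw [this]
      simp [hadj]

lemma transpose_mul_inc (hcr : IsCliqueRegular G ω) :
    (cliqueInc G ω)ᵀ * cliqueInc G ω
      = (cliqueGraph G ω).adjMatrix ℝ + (ω : ℝ) • 1 := by
  ext s t
  rw [Matrix.mul_apply]
  have hsum : ∀ v : V,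
      (cliqueInc G ω)ᵀ s v * cliqueInc G ω v t
        = if v ∈ s.val ∩ t.val then (1 : ℝ) else 0 := by
    intro v
    simp only [cliqueInc, Matrix.transpose_apply, Finset.mem_inter]
    by_cases h1 : v ∈ s.val <;> by_cases h2 : v ∈ t.val <;> simp [h1, h2]
  simp only [hsum, Finset.sum_boole, Finset.filter_univ_mem]
  by_cases hst : s = t
  · subst hst
    simp only [Finset.inter_self, s.2.2, Matrix.add_apply, adjMatrix_apply,
      Matrix.smul_apply, Matrix.one_apply_eq, smul_eq_mul, mul_one]
    simp [cliqueGraph]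
  · simp only [Matrix.add_apply, adjMatrix_apply, Matrix.smul_apply,
      Matrix.one_apply_ne hst, smul_eq_mul, mul_zero, add_zero]
    by_cases hne : (s.val ∩ t.val).Nonempty
    · have hcard : (s.val ∩ t.val).card = 1 := by
        refine le_antisymm ?_ (Finset.card_pos.2 hne)
        rw [Finset.card_le_one]
        intro a ha b hb
        by_contra hab
        rw [Finset.mem_inter] at ha hb
        have hadj : G.Adj a b := s.2.1 ha.1 hb.1 hab
        obtain ⟨w, _, huniq⟩ := hcr.2 hadj
        have h1 : s.val = w := huniq s.val ⟨s.2, ha.1, hb.1⟩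
        have h2 : t.val = w := huniq t.val ⟨t.2, ha.2, hb.2⟩
        exact hst (Subtype.ext (h1.trans h2.symm))
      rw [hcard]
      have : (cliqueGraph G ω).Adj s t := ⟨hst, hne⟩
      simp [this]
    · rw [Finset.not_nonempty_iff_eq_empty] at hne
      have : ¬ (cliqueGraph G ω).Adj s t := by
        rintro ⟨_, h2⟩
        rw [hne] at h2
        exact Finset.not_nonempty_empty h2
      simp [hne, this]


end Mat

/-- If `Γ` is `k`-regular and `ω`-clique regular with `n` vertices and
`m = nk/(ω(ω−1))` `ω`-cliques, then
`p(C_ω(Γ); λ) = (λ+ω)^{m−n} p(Γ; λ+ω−k/(ω−1))`, stated with both sides multiplied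
by `(λ+ω)^n` to avoid a possibly negative exponent. -/
theorem stmt9 {V : Type*} [Fintype V] [DecidableEq V] (G : SimpleGraph V)
    [DecidableRel G.Adj] (ω k n m : ℕ)
    (hn : n = Fintype.card V)
    (hm : m = Fintype.card {s : Finset V // G.IsNClique ω s})
    (hm' : m * (ω * (ω - 1)) = n * k)
    (hreg : G.IsRegularOfDegree k) (hcr : IsCliqueRegular G ω) :
    ∀ x : ℝ,
      (x + ω) ^ n * (((cliqueGraph G ω).adjMatrix ℝ).charpoly.eval x) =
        (x + ω) ^ m *
          ((G.adjMatrix ℝ).charpoly.eval (x + ω - (k : ℝ) / ((ω : ℝ) - 1))) := by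
  classical
  obtain ⟨a, b, hab⟩ : ∃ a b, G.Adj a b := by
    obtain ⟨e, he⟩ := hcr.1
    induction e with
    | h a b => exact ⟨a, b, G.mem_edgeSet.1 he⟩
  obtain ⟨t, ⟨ht, hta, htb⟩, -⟩ := hcr.2 hab
  have hω2 : 2 ≤ ω := by
    rw [← ht.2]
    exact Finset.one_lt_card.2 ⟨a, hta, b, htb, G.ne_of_adj hab⟩
  have hn0 : n ≠ 0 := by
    rw [hn]
    have : Nonempty V := ⟨a⟩
    exact Fintype.card_ne_zero
  have hm0 : m ≠ 0 := by
    rw [hm]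
    have : Nonempty {s : Finset V // G.IsNClique ω s} := ⟨⟨t, ht⟩⟩
    exact Fintype.card_ne_zero
  intro x
  set N := cliqueInc G ω with hN
  set ρ := (k : ℝ) / ((ω : ℝ) - 1) with hρ
  rw [myEvalCharpoly, myEvalCharpoly]
  have hC : x • (1 : Matrix _ _ ℝ) - (cliqueGraph G ω).adjMatrix ℝ
      = (x + ω) • 1 - Nᵀ * N := by
    rw [transpose_mul_inc hcr, add_smul]
    abel
  have hA : (x + ↑ω - ρ) • (1 : Matrix V V ℝ) - G.adjMatrix ℝ
      = (x + ω) • 1 - N * Nᵀ := by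
    rw [inc_mul_transpose hcr hreg hω2, sub_smul, add_smul]
    abel
  rw [hC, hA]
  rcases eq_or_ne (x + (ω : ℝ)) 0 with hy | hy
  · rw [hy, zero_pow hn0, zero_pow hm0, zero_mul, zero_mul]
  · have := myKey N (x + ω) hy
    rw [hn, hm]
    exact this.symm
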